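/- A groupoid-graded ring S is epsilon-strongly graded if and only if for each morphism g of G there exists an element ε_g ∈ S_g S_{g^{-1}} such that ε_g s = s = s ε_{g^{-1}} for all s ∈ S_g. -/

import Mathlib

/- Setup: a ring `S` graded by a small groupoid.  The groupoid is given by a
`CategoryTheory.Groupoid` structure on a type `Obj` of objects.  Composition
convention: for `g : X ⟶ Y` and `h : Y ⟶ Z`, `g ≫ h : X ⟶ Z`; the grading
satisfies `S_g · S_h ⊆ S_{g ≫ h}` for composable morphisms and
`S_g · S_h = 0` otherwise, and `S = ⊕_{g} S_g` (an internal direct sum over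
the type of all morphisms). -/

open CategoryTheory DirectSum

/-- The type of all morphisms of the groupoid. -/
abbrev MorTot (Obj : Type u) [Groupoid.{v} Obj] : Type (max u v) := Σ X Y : Obj, X ⟶ Y

/-- Product of two additive subgroups of a ring: the additive span of the set of
pairwise products. -/
def aMul {S : Type w} [Ring S] (A B : AddSubgroup S) : AddSubgroup S :=
  AddSubgroup.closure {x : S | ∃ a ∈ A, ∃ b ∈ B, x = a * b}

/-- A grading of the ring `S` by the groupoid with objects `Obj`. -/
structure GroupoidGrading (Obj : Type u) [Groupoid.{v} Obj] [DecidableEq (MorTot Obj)]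
    (S : Type w) [Ring S] where
  comp : ∀ ⦃X Y : Obj⦄, (X ⟶ Y) → AddSubgroup S
  internal : DirectSum.IsInternal (fun g : MorTot Obj => comp g.2.2)
  mul_mem : ∀ ⦃X Y Z : Obj⦄ (g : X ⟶ Y) (h : Y ⟶ Z) ⦃a b : S⦄,
    a ∈ comp g → b ∈ comp h → a * b ∈ comp (g ≫ h)
  mul_eq_zero : ∀ ⦃X Y Z W : Obj⦄ (g : X ⟶ Y) (h : Z ⟶ W), Y ≠ Z →
    ∀ ⦃a b : S⦄, a ∈ comp g → b ∈ comp h → a * b = 0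

variable {Obj : Type u} [Groupoid.{v} Obj] [DecidableEq (MorTot Obj)]
  {S : Type w} [Ring S]

/-- The component `(1_S)_e ∈ S_e` of `1` at the identity morphism of `X`. -/
noncomputable def GroupoidGrading.oneComponent (hS : GroupoidGrading Obj S) (X : Obj) : S :=
  ((Equiv.ofBijective _ hS.internal).symm (1 : S) ⟨X, X, 𝟙 X⟩ : hS.comp (𝟙 X))

/-- `I` is a unital ideal of the (sub)ring `C`. -/
def IsUnitalIdealOf {S : Type w} [Ring S] (I C : AddSubgroup S) : Prop :=
  I ≤ C ∧ (∀ a ∈ C, ∀ x ∈ I, a * x ∈ I ∧ x * a ∈ I) ∧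
    ∃ e ∈ I, ∀ x ∈ I, e * x = x ∧ x * e = x

/-- `S` is epsilon-strongly graded: each `S_g S_{g⁻¹}` is a unital ideal of
`S_{c(g)}` and `S_g S_h = (S_g S_{g⁻¹}) S_{gh} = S_{gh} (S_{h⁻¹} S_h)` for all
composable pairs. -/
def GroupoidGrading.EpsilonStrong {Obj : Type u} [Groupoid.{v} Obj]
    [DecidableEq (MorTot Obj)] {S : Type w} [Ring S]
    (hS : GroupoidGrading Obj S) : Prop :=
  (∀ ⦃X Y : Obj⦄ (g : X ⟶ Y),
     IsUnitalIdealOf (aMul (hS.comp g) (hS.comp (Groupoid.inv g))) (hS.comp (𝟙 X))) ∧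
  (∀ ⦃X Y Z : Obj⦄ (g : X ⟶ Y) (h : Y ⟶ Z),
     aMul (hS.comp g) (hS.comp h)
       = aMul (aMul (hS.comp g) (hS.comp (Groupoid.inv g))) (hS.comp (g ≫ h)) ∧
     aMul (hS.comp g) (hS.comp h)
       = aMul (hS.comp (g ≫ h)) (aMul (hS.comp (Groupoid.inv h)) (hS.comp h)))



section Aux

lemma mem_aMul {A B : AddSubgroup S} {a b : S} (ha : a ∈ A) (hb : b ∈ B) :
    a * b ∈ aMul A B :=
  AddSubgroup.subset_closure ⟨a, ha, b, hb, rfl⟩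

lemma aMul_le {A B C : AddSubgroup S} (h : ∀ a ∈ A, ∀ b ∈ B, a * b ∈ C) :
    aMul A B ≤ C := by
  rw [aMul, AddSubgroup.closure_le]
  rintro x ⟨a, ha, b, hb, rfl⟩
  exact h a ha b hb

lemma aMul_hom_le {A B C : AddSubgroup S} (f : S →+ S)
    (h : ∀ a ∈ A, ∀ b ∈ B, f (a * b) ∈ C) : ∀ x ∈ aMul A B, f x ∈ C := by
  intro x hx
  have hle : aMul A B ≤ C.comap f := aMul_le (fun a ha b hb => h a ha b hb)
  exact hle hx

lemma aMul_mulLeft_cancel {A B : AddSubgroup S} {e : S}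
    (h : ∀ a ∈ A, ∀ b ∈ B, e * (a * b) = a * b) {x : S} (hx : x ∈ aMul A B) :
    e * x = x := by
  have hker : aMul A B ≤ (AddMonoidHom.mulLeft e - AddMonoidHom.id S).ker :=
    aMul_le fun a ha b hb => by
      simp only [AddMonoidHom.mem_ker, AddMonoidHom.sub_apply, AddMonoidHom.coe_mulLeft,
        AddMonoidHom.id_apply, sub_eq_zero]
      exact h a ha b hb
  have := hker hx
  simpa [AddMonoidHom.mem_ker, sub_eq_zero] using this

lemma aMul_mulRight_cancel {A B : AddSubgroup S} {e : S}
    (h : ∀ a ∈ A, ∀ b ∈ B, (a * b) * e = a * b) {x : S} (hx : x ∈ aMul A B) :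
    x * e = x := by
  have hker : aMul A B ≤ (AddMonoidHom.mulRight e - AddMonoidHom.id S).ker :=
    aMul_le fun a ha b hb => by
      simp only [AddMonoidHom.mem_ker, AddMonoidHom.sub_apply, AddMonoidHom.coe_mulRight,
        AddMonoidHom.id_apply, sub_eq_zero]
      exact h a ha b hb
  have := hker hx
  simpa [AddMonoidHom.mem_ker, sub_eq_zero] using this

lemma MorTot.ne_of_fst {P Q Y Z : Obj} {f : P ⟶ Q} {g : Y ⟶ Z} (h : P ≠ Y) :
    (⟨P, Q, f⟩ : MorTot Obj) ≠ ⟨Y, Z, g⟩ :=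
  fun h3 => h (congrArg Sigma.fst h3)

lemma MorTot.ne_of_snd {P Q Y Z : Obj} {f : P ⟶ Q} {g : Y ⟶ Z} (h : Q ≠ Z) :
    (⟨P, Q, f⟩ : MorTot Obj) ≠ ⟨Y, Z, g⟩ := by
  intro h3
  apply h
  have := congrArg (fun z : MorTot Obj => z.2.1) h3
  exact this

lemma MorTot.ne_of_map {P Q : Obj} {f g : P ⟶ Q} (h : f ≠ g) :
    (⟨P, Q, f⟩ : MorTot Obj) ≠ ⟨P, Q, g⟩ := by
  intro h3
  apply h
  obtain ⟨-, h4⟩ := Sigma.ext_iff.mp h3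
  obtain ⟨-, h5⟩ := Sigma.ext_iff.mp (eq_of_heq h4)
  exact eq_of_heq h5

namespace GroupoidGrading

variable (hS : GroupoidGrading Obj S)

/-- The decomposition of `S` as an additive equivalence. -/
noncomputable def decomp : S ≃+ ⨁ g : MorTot Obj, hS.comp g.2.2 :=
  (AddEquiv.ofBijective (DirectSum.coeAddMonoidHom fun g : MorTot Obj => hS.comp g.2.2)
    hS.internal).symm

lemma decomp_symm_apply (x : ⨁ g : MorTot Obj, hS.comp g.2.2) :
    hS.decomp.symm x = DirectSum.coeAddMonoidHom (fun g : MorTot Obj => hS.comp g.2.2) x := rfl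

lemma decomp_of_mem {i : MorTot Obj} {s : S} (h : s ∈ hS.comp i.2.2) :
    hS.decomp s = DirectSum.of _ i ⟨s, h⟩ := by
  apply hS.decomp.symm.injective
  rw [AddEquiv.symm_apply_apply, decomp_symm_apply, DirectSum.coeAddMonoidHom_of]

/-- Projection onto the `i`-component, as an additive map `S →+ S`. -/
noncomputable def proj (i : MorTot Obj) : S →+ S :=
  AddMonoidHom.mk' (fun s => (hS.decomp s i : S)) (by
    intro a b
    simp [map_add, DirectSum.add_apply])

lemma proj_apply (i : MorTot Obj) (s : S) : hS.proj i s = (hS.decomp s i : S) := rfl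

lemma proj_eq_same {i : MorTot Obj} {s : S} (h : s ∈ hS.comp i.2.2) :
    hS.proj i s = s := by
  rw [proj_apply, hS.decomp_of_mem h, DirectSum.of_eq_same]

lemma proj_eq_zero {i j : MorTot Obj} (hij : j ≠ i) {s : S} (h : s ∈ hS.comp j.2.2) :
    hS.proj i s = 0 := by
  rw [proj_apply, hS.decomp_of_mem h, DirectSum.of_eq_of_ne _ _ _ hij.symm]
  rfl

lemma one_eq_sum [inst : ∀ (i : MorTot Obj) (x : hS.comp i.2.2), Decidable (x ≠ 0)] :
    (1 : S) = ∑ k ∈ (hS.decomp 1).support, ((hS.decomp 1) k : S) := by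
  have h2 : hS.decomp.symm (hS.decomp 1) = (1 : S) := hS.decomp.symm_apply_apply 1
  rw [decomp_symm_apply] at h2
  conv_lhs => rw [← h2, ← DirectSum.sum_support_of (hS.decomp 1)]
  rw [map_sum]
  simp only [DirectSum.coeAddMonoidHom_of]

lemma oneComponent_eq (X : Obj) :
    hS.oneComponent X = ((hS.decomp 1) ⟨X, X, 𝟙 X⟩ : S) := by
  have h : (Equiv.ofBijective _ hS.internal).symm (1 : S) = hS.decomp 1 := by
    apply (Equiv.ofBijective _ hS.internal).injective
    rw [Equiv.apply_symm_apply]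
    exact (hS.decomp.symm_apply_apply 1).symm
  rw [GroupoidGrading.oneComponent, h]

lemma oneComponent_mem (X : Obj) : hS.oneComponent X ∈ hS.comp (𝟙 X) := by
  rw [oneComponent_eq]
  exact SetLike.coe_mem _

lemma mul_oneComponent {X Y : Obj} {g : X ⟶ Y} {s : S} (hs : s ∈ hS.comp g) :
    s * hS.oneComponent Y = s := by
  classical
  set u := hS.decomp 1 with hu
  have key : ∀ k : MorTot Obj, hS.proj ⟨X, Y, g⟩ (s * (u k : S))
      = if k = (⟨Y, Y, 𝟙 Y⟩ : MorTot Obj) then s * (u k : S) else 0 := by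
    rintro ⟨P, Q, f⟩
    by_cases hP : P = Y
    · subst hP
      have hm : s * (u ⟨P, Q, f⟩ : S) ∈ hS.comp (g ≫ f) :=
        hS.mul_mem g f hs (SetLike.coe_mem _)
      by_cases hQ : Q = P
      · subst hQ
        by_cases hf : f = 𝟙 Q
        · subst hf
          rw [if_pos rfl]
          rw [Category.comp_id] at hm
          exact hS.proj_eq_same hm
        · rw [if_neg (MorTot.ne_of_map hf)]
          have hgf : g ≫ f ≠ g := by
            intro h3
            apply hf
            rw [← cancel_epi g, Category.comp_id]
            exact h3
          exact hS.proj_eq_zero (j := ⟨X, Q, g ≫ f⟩) (MorTot.ne_of_map hgf) hm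
      · rw [if_neg (MorTot.ne_of_snd hQ)]
        exact hS.proj_eq_zero (j := ⟨X, Q, g ≫ f⟩) (MorTot.ne_of_snd hQ) hm
    · have h0 : s * (u ⟨P, Q, f⟩ : S) = 0 :=
        hS.mul_eq_zero g f (fun h3 => hP h3.symm) hs (SetLike.coe_mem _)
      rw [h0, if_neg (MorTot.ne_of_fst hP), map_zero]
  have hsum : s = ∑ k ∈ u.support, s * (u k : S) := by
    have h1 : (1 : S) = ∑ k ∈ u.support, (u k : S) := by
      rw [hu]; exact hS.one_eq_sum
    rw [← Finset.mul_sum, ← h1, mul_one]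
  have hproj : s = ∑ k ∈ u.support, hS.proj ⟨X, Y, g⟩ (s * (u k : S)) := by
    rw [← map_sum, ← hsum]
    exact (hS.proj_eq_same hs).symm
  rw [Finset.sum_congr rfl (fun k _ => key k), Finset.sum_ite_eq' u.support _ _] at hproj
  have final : s = s * (u ⟨Y, Y, 𝟙 Y⟩ : S) := by
    by_cases hk : (⟨Y, Y, 𝟙 Y⟩ : MorTot Obj) ∈ u.support
    · rwa [if_pos hk] at hproj
    · rw [if_neg hk] at hproj
      rw [DFinsupp.notMem_support_iff.mp hk]
      simp [hproj]
  rw [hS.oneComponent_eq Y, ← hu]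
  exact final.symm

lemma oneComponent_mul {X Y : Obj} {g : X ⟶ Y} {s : S} (hs : s ∈ hS.comp g) :
    hS.oneComponent X * s = s := by
  classical
  set u := hS.decomp 1 with hu
  have key : ∀ k : MorTot Obj, hS.proj ⟨X, Y, g⟩ ((u k : S) * s)
      = if k = (⟨X, X, 𝟙 X⟩ : MorTot Obj) then (u k : S) * s else 0 := by
    rintro ⟨P, Q, f⟩
    by_cases hQ : Q = X
    · subst hQ
      have hm : (u ⟨P, Q, f⟩ : S) * s ∈ hS.comp (f ≫ g) :=
        hS.mul_mem f g (SetLike.coe_mem _) hs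
      by_cases hP : P = Q
      · subst hP
        by_cases hf : f = 𝟙 P
        · subst hf
          rw [if_pos rfl]
          rw [Category.id_comp] at hm
          exact hS.proj_eq_same hm
        · rw [if_neg (MorTot.ne_of_map hf)]
          have hgf : f ≫ g ≠ g := by
            intro h3
            apply hf
            rw [← cancel_mono g, Category.id_comp]
            exact h3
          exact hS.proj_eq_zero (j := ⟨P, Y, f ≫ g⟩) (MorTot.ne_of_map hgf) hm
      · rw [if_neg (MorTot.ne_of_fst hP)]
        exact hS.proj_eq_zero (j := ⟨P, Y, f ≫ g⟩) (MorTot.ne_of_fst hP) hm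
    · have h0 : (u ⟨P, Q, f⟩ : S) * s = 0 :=
        hS.mul_eq_zero f g hQ (SetLike.coe_mem _) hs
      rw [h0, if_neg (MorTot.ne_of_snd hQ), map_zero]
  have hsum : s = ∑ k ∈ u.support, (u k : S) * s := by
    have h1 : (1 : S) = ∑ k ∈ u.support, (u k : S) := by
      rw [hu]; exact hS.one_eq_sum
    rw [← Finset.sum_mul, ← h1, one_mul]
  have hproj : s = ∑ k ∈ u.support, hS.proj ⟨X, Y, g⟩ ((u k : S) * s) := by
    rw [← map_sum, ← hsum]
    exact (hS.proj_eq_same hs).symm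
  rw [Finset.sum_congr rfl (fun k _ => key k), Finset.sum_ite_eq' u.support _ _] at hproj
  have final : s = (u ⟨X, X, 𝟙 X⟩ : S) * s := by
    by_cases hk : (⟨X, X, 𝟙 X⟩ : MorTot Obj) ∈ u.support
    · rwa [if_pos hk] at hproj
    · rw [if_neg hk] at hproj
      rw [DFinsupp.notMem_support_iff.mp hk]
      simp [hproj]
  rw [hS.oneComponent_eq X, ← hu]
  exact final.symm

end GroupoidGrading

set_option linter.unusedSectionVars false in
lemma groupoid_inv_inv {X Y : Obj} (g : X ⟶ Y) :
    Groupoid.inv (Groupoid.inv g) = g := by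
  simp [Groupoid.inv_eq_inv]

end Aux

/-- A groupoid-graded ring `S` is epsilon-strongly graded if and
only if for each morphism `g` there is `ε_g ∈ S_g S_{g⁻¹}` with
`ε_g s = s = s ε_{g⁻¹}` for all `s ∈ S_g`. -/
theorem epsilonStrong_iff (hS : GroupoidGrading Obj S) :
    hS.EpsilonStrong ↔
    ∃ ε : ∀ (X Y : Obj), (X ⟶ Y) → S,
      ∀ (X Y : Obj) (g : X ⟶ Y),
        ε X Y g ∈ aMul (hS.comp g) (hS.comp (Groupoid.inv g)) ∧
        ∀ s ∈ hS.comp g, ε X Y g * s = s ∧ s * ε Y X (Groupoid.inv g) = s := by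
  constructor
  · rintro ⟨hIdeal, hPair⟩
    choose e he₁ he₂ using fun (X Y : Obj) (g : X ⟶ Y) => (hIdeal g).2.2
    refine ⟨e, fun X Y g => ⟨he₁ X Y g, fun s hs => ⟨?_, ?_⟩⟩⟩
    · -- `ε_g s = s`
      have h1 : s ∈ aMul (hS.comp g) (hS.comp (𝟙 Y)) := by
        rw [← hS.mul_oneComponent hs]
        exact mem_aMul hs (hS.oneComponent_mem Y)
      have h2 := (hPair g (𝟙 Y)).1
      rw [Category.comp_id] at h2
      rw [h2] at h1
      exact aMul_mulLeft_cancel (fun a ha b hb => by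
        rw [← mul_assoc, (he₂ X Y g a ha).1]) h1
    · -- `s ε_{g⁻¹} = s`
      have h1 : s ∈ aMul (hS.comp (𝟙 X)) (hS.comp g) := by
        rw [← hS.oneComponent_mul hs]
        exact mem_aMul (hS.oneComponent_mem X) hs
      have h2 := (hPair (𝟙 X) g).2
      rw [Category.id_comp] at h2
      rw [h2] at h1
      have hunit := he₂ Y X (Groupoid.inv g)
      rw [groupoid_inv_inv] at hunit
      exact aMul_mulRight_cancel (fun a ha b hb => by
        rw [mul_assoc, (hunit b hb).2]) h1
  · rintro ⟨ε, hε⟩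
    constructor
    · intro X Y g
      refine ⟨?_, ?_, ε X Y g, (hε X Y g).1, fun x hx => ⟨?_, ?_⟩⟩
      · -- `I_g ≤ S_{𝟙 X}`
        exact aMul_le fun a ha b hb => by
          have := hS.mul_mem g (Groupoid.inv g) ha hb
          rwa [Groupoid.comp_inv] at this
      · -- ideal property
        intro a ha x hx
        constructor
        · exact aMul_hom_le (AddMonoidHom.mulLeft a) (fun p hp q hq => by
            show a * (p * q) ∈ _
            rw [← mul_assoc]
            have hap : a * p ∈ hS.comp g := by
              have := hS.mul_mem (𝟙 X) g ha hp
              rwa [Category.id_comp] at this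
            exact mem_aMul hap hq) x hx
        · exact aMul_hom_le (AddMonoidHom.mulRight a) (fun p hp q hq => by
            show (p * q) * a ∈ _
            rw [mul_assoc]
            have hqa : q * a ∈ hS.comp (Groupoid.inv g) := by
              have := hS.mul_mem (Groupoid.inv g) (𝟙 X) hq ha
              rwa [Category.comp_id] at this
            exact mem_aMul hp hqa) x hx
      · -- `ε_g` is a left unit
        exact aMul_mulLeft_cancel (fun a ha b hb => by
          rw [← mul_assoc, ((hε X Y g).2 a ha).1]) hx
      · -- `ε_g` is a right unit
        have hunit := fun b hb => ((hε Y X (Groupoid.inv g)).2 b hb).2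
        rw [groupoid_inv_inv] at hunit
        exact aMul_mulRight_cancel (fun a ha b hb => by
          rw [mul_assoc, hunit b hb]) hx
    · intro X Y Z g h
      constructor
      · -- `S_g S_h = (S_g S_{g⁻¹}) S_{gh}`
        refine le_antisymm (aMul_le fun a ha b hb => ?_) (aMul_le fun x hx w hw => ?_)
        · have h1 : a * b = ε X Y g * (a * b) := by
            rw [← mul_assoc, ((hε X Y g).2 a ha).1]
          rw [h1]
          exact mem_aMul (hε X Y g).1 (hS.mul_mem g h ha hb)
        · exact aMul_hom_le (AddMonoidHom.mulRight w) (fun p hp q hq => by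
            show (p * q) * w ∈ _
            rw [mul_assoc]
            have hqw : q * w ∈ hS.comp h := by
              have := hS.mul_mem (Groupoid.inv g) (g ≫ h) hq hw
              rwa [← Category.assoc, Groupoid.inv_comp, Category.id_comp] at this
            exact mem_aMul hp hqw) x hx
      · -- `S_g S_h = S_{gh} (S_{h⁻¹} S_h)`
        refine le_antisymm (aMul_le fun a ha b hb => ?_) (aMul_le fun w hw x hx => ?_)
        · have hm := (hε Z Y (Groupoid.inv h)).1
          rw [groupoid_inv_inv] at hm
          have h1 : a * b = (a * b) * ε Z Y (Groupoid.inv h) := by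
            rw [mul_assoc, ((hε Y Z h).2 b hb).2]
          rw [h1]
          exact mem_aMul (hS.mul_mem g h ha hb) hm
        · exact aMul_hom_le (AddMonoidHom.mulLeft w) (fun p hp q hq => by
            show w * (p * q) ∈ _
            rw [← mul_assoc]
            have hwp : w * p ∈ hS.comp g := by
              have := hS.mul_mem (g ≫ h) (Groupoid.inv h) hw hp
              rwa [Category.assoc, Groupoid.comp_inv, Category.comp_id] at this
            exact mem_aMul hwp hq) x hx
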